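/- Let (r_α)_{α>0} be a generator of a regularisation method with constant ρ̃ ∈ (0,1) as in condition (iv), and suppose ‖x_α(y) − x†‖ > 0 for all α > 0. For δ > 0 let α_δ > 0 be the unique solution of α_δ·‖x_{α_δ}(y) − x†‖² = δ². Then for every δ > 0 such that α_δ belongs to the spectrum σ(LL*) of LL*, one has: sup over ỹ with ‖ỹ − y‖ ≤ δ of the infimum over α > 0 of ‖x_α(ỹ) − x†‖² is at least ((1−√ρ̃)²/2)·δ²/α_δ. (Lower bound of Lemma 3.2.) -/

import Mathlib

open MeasureTheory RealInnerProductSpace Filter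

set_option maxHeartbeats 1600000 in
theorem statement9
    {X : Type*} [NormedAddCommGroup X] [InnerProductSpace ℝ X] [CompleteSpace X]
    {Y : Type*} [NormedAddCommGroup Y] [InnerProductSpace ℝ Y] [CompleteSpace Y]
    (L : X →L[ℝ] Y) (y : Y) (xdag : X)
    (hsol : L xdag = y) (hmin : ∀ x : X, L x = y → ‖xdag‖ ≤ ‖x‖)
    (r : ℝ → ℝ → ℝ) (ρ ρt : ℝ) (hρ0 : 0 < ρ) (hρ1 : ρ < 1) (hρt0 : 0 < ρt) (hρt1 : ρt < 1)
    (hrcont : ∀ α > (0:ℝ), ContinuousOn (r α) (Set.Ici 0))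
    (hrnonneg : ∀ α > (0:ℝ), ∀ t ∈ Set.Ici (0:ℝ), 0 ≤ r α t)
    (hrbound : ∀ α > (0:ℝ), ∀ t > (0:ℝ), r α t ≤ min (1 / t) (ρ / Real.sqrt (α * t)))
    (hrt_anti : ∀ α > (0:ℝ), AntitoneOn (fun t => (1 - t * r α t) ^ 2) (Set.Ici 0))
    (hrt_cont : ∀ t ∈ Set.Ici (0:ℝ), ContinuousOn (fun α => (1 - t * r α t) ^ 2) (Set.Ioi 0))
    (hrt_mono : ∀ t ∈ Set.Ici (0:ℝ), MonotoneOn (fun α => (1 - t * r α t) ^ 2) (Set.Ioi 0))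
    (hrt_lt : ∀ α > (0:ℝ), (1 - α * r α α) ^ 2 < ρt)
    (xr : ℝ → Y → X) (Rs : ℝ → X →L[ℝ] X)
    (hxr : ∀ α > (0:ℝ), ∀ z : Y, xr α z = Rs α ((ContinuousLinearMap.adjoint L) z))
    (e : StieltjesFunction ℝ) (he0 : e 0 = 0)
    (he_const : ∀ t : ℝ, ‖L‖ ^ 2 ≤ t → e t = e (‖L‖ ^ 2))
    (hint : ∀ α > (0:ℝ),
      ‖xr α y - xdag‖ ^ 2 = ∫ t in Set.Ioc (0:ℝ) (‖L‖ ^ 2), (1 - t * r α t) ^ 2 ∂e.measure)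
    (ΦY : (ℝ → ℝ) → (Y →L[ℝ] Y))
    (hΦadd : ∀ f g : ℝ → ℝ, ΦY (fun t => f t + g t) = ΦY f + ΦY g)
    (hΦmul : ∀ f g : ℝ → ℝ, ΦY (fun t => f t * g t) = (ΦY f).comp (ΦY g))
    (hΦone : ΦY (fun _ => (1:ℝ)) = ContinuousLinearMap.id ℝ Y)
    (hΦid : ΦY (fun t => t) = L.comp (ContinuousLinearMap.adjoint L))
    (hΦsa : ∀ f : ℝ → ℝ, ∀ u v : Y, ⟪ΦY f u, v⟫ = ⟪u, ΦY f v⟫)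
    (hΦpos : ∀ f : ℝ → ℝ, (∀ t ∈ Set.Icc (0:ℝ) (‖L‖ ^ 2), 0 ≤ f t) → ∀ u : Y, 0 ≤ ⟪ΦY f u, u⟫)
    (hΦnorm : ∀ f : ℝ → ℝ, ∀ c : ℝ, (∀ t ∈ Set.Icc (0:ℝ) (‖L‖ ^ 2), |f t| ≤ c) →
      ∀ u : Y, ‖ΦY f u‖ ≤ c * ‖u‖)
    (hΦspec : ∀ a b t : ℝ, a ≤ t → t ≤ b →
      t ∈ spectrum ℝ (L.comp (ContinuousLinearMap.adjoint L)) →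
      ΦY (Set.indicator (Set.Icc a b) (fun _ => (1:ℝ))) ≠ 0)
    (hRssa : ∀ α > (0:ℝ), ∀ u v : X, ⟪Rs α u, v⟫ = ⟪u, Rs α v⟫)
    (hcomm : ∀ α > (0:ℝ), L.comp (Rs α) = (ΦY (r α)).comp L)
    (hpos : ∀ α > (0:ℝ), 0 < ‖xr α y - xdag‖)
    (αδ : ℝ → ℝ)
    (hαδ : ∀ δ > (0:ℝ), 0 < αδ δ ∧ αδ δ * ‖xr (αδ δ) y - xdag‖ ^ 2 = δ ^ 2) :
    ∀ δ > (0:ℝ), αδ δ ∈ spectrum ℝ (L.comp (ContinuousLinearMap.adjoint L)) →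
      (1 - Real.sqrt ρt) ^ 2 / 2 * (δ ^ 2 / αδ δ) ≤ (⨆ yt : {z : Y // ‖z - y‖ ≤ δ}, ⨅ a : {a : ℝ // 0 < a}, ‖xr a.1 yt.1 - xdag‖ ^ 2) := by
  intro δ hδ hspec
  obtain ⟨hα, heq⟩ := hαδ δ hδ
  set α' := αδ δ with hα'def
  -- the indicator function at α'
  set ind : ℝ → ℝ := Set.indicator (Set.Icc α' α') (fun _ => (1:ℝ)) with hinddef
  set P : Y →L[ℝ] Y := ΦY ind with hPdef
  have hindsq : (fun t => ind t * ind t) = ind := by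
    funext t
    by_cases ht : t ∈ Set.Icc α' α'
    · rw [hinddef, Set.indicator_of_mem ht]; norm_num
    · rw [hinddef, Set.indicator_of_notMem ht]; norm_num
  have hPP : P.comp P = P := by
    rw [hPdef, ← hΦmul, hindsq]
  have hPne : P ≠ 0 := hΦspec α' α' α' le_rfl le_rfl hspec
  -- smul lemma
  have hsmul : ∀ c : ℝ, ΦY (fun t => c * ind t) = c • P := by
    have hadd : ∀ a b : ℝ, ΦY (fun t => (a + b) * ind t) =
        ΦY (fun t => a * ind t) + ΦY (fun t => b * ind t) := by
      intro a b
      rw [← hΦadd]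
      congr 1
      funext t; ring
    set ψ : ℝ →+ (Y →L[ℝ] Y) := AddMonoidHom.mk' (fun c => ΦY (fun t => c * ind t)) hadd
      with hψdef
    have hnorm : ∀ c : ℝ, ‖ψ c‖ ≤ |c| := by
      intro c
      apply ContinuousLinearMap.opNorm_le_bound _ (abs_nonneg c)
      intro u
      apply hΦnorm _ _ _ u
      intro t ht
      by_cases h : t ∈ Set.Icc α' α'
      · rw [hinddef, Set.indicator_of_mem h]; simp
      · rw [hinddef, Set.indicator_of_notMem h]; simp
    have hlip : LipschitzWith 1 ψ := by
      apply LipschitzWith.of_dist_le_mul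
      intro a b
      rw [dist_eq_norm, ← _root_.map_sub]
      calc ‖ψ (a - b)‖ ≤ |a - b| := hnorm _
        _ = 1 * dist a b := by rw [one_mul, Real.dist_eq]
    have hcont : Continuous ψ := hlip.continuous
    intro c
    have := map_real_smul ψ hcont c 1
    simp only [smul_eq_mul, mul_one] at this
    have hψ1 : ψ 1 = P := by
      show ΦY (fun t => 1 * ind t) = P
      rw [hPdef]; congr 1; funext t; rw [one_mul]
    show ψ c = c • P
    rw [this, hψ1]
  -- eigenvector property
  have hfv : ∀ (f : ℝ → ℝ) (v : Y), P v = v → ΦY f v = f α' • v := by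
    intro f v hv
    have h1 : (fun t => f t * ind t) = (fun t => f α' * ind t) := by
      funext t
      by_cases ht : t ∈ Set.Icc α' α'
      · have : t = α' := le_antisymm ht.2 ht.1
        rw [this]
      · rw [hinddef, Set.indicator_of_notMem ht, mul_zero, mul_zero]
    have h2 := hΦmul f ind
    rw [h1, hsmul] at h2
    calc ΦY f v = ΦY f (P v) := by rw [hv]
      _ = ((ΦY f).comp P) v := rfl
      _ = (f α' • P) v := by rw [← h2]
      _ = f α' • v := by rw [ContinuousLinearMap.smul_apply, hv]
  -- construct unit vector w with P w = w and ⟪y, w⟫ ≤ 0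
  obtain ⟨u, hu⟩ : ∃ u : Y, P u ≠ 0 := by
    by_contra h
    push_neg at h
    exact hPne (ContinuousLinearMap.ext fun u => by simp [h u])
  have hnu : ‖P u‖ ≠ 0 := norm_ne_zero_iff.mpr hu
  set w₀ : Y := ‖P u‖⁻¹ • P u with hw₀def
  have hPw₀ : P w₀ = w₀ := by
    rw [hw₀def, _root_.map_smul]
    congr 1
    calc P (P u) = (P.comp P) u := rfl
      _ = P u := by rw [hPP]
  have hw₀norm : ‖w₀‖ = 1 := by
    rw [hw₀def, norm_smul, norm_inv, norm_norm, inv_mul_cancel₀ hnu]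
  set w : Y := if ⟪y, w₀⟫ ≤ 0 then w₀ else -w₀ with hwdef
  have hPw : P w = w := by
    rw [hwdef]
    split_ifs <;> simp [hPw₀]
  have hwnorm : ‖w‖ = 1 := by
    rw [hwdef]; split_ifs <;> simp [hw₀norm]
  have hyw : ⟪y, w⟫ ≤ (0:ℝ) := by
    rw [hwdef]
    split_ifs with h
    · exact h
    · rw [inner_neg_right]; linarith
  have hfw : ∀ f : ℝ → ℝ, ΦY f w = f α' • w := fun f => hfv f w hPw
  -- basic facts about r
  have hA := ContinuousLinearMap.adjoint L
  have hLcomm : ∀ a > (0:ℝ), ∀ x : X, L (Rs a x) = ΦY (r a) (L x) := by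
    intro a ha x
    have := hcomm a ha
    calc L (Rs a x) = (L.comp (Rs a)) x := rfl
      _ = ((ΦY (r a)).comp L) x := by rw [this]
      _ = ΦY (r a) (L x) := rfl
  have hLLw : L ((ContinuousLinearMap.adjoint L) w) = α' • w := by
    have h1 : ΦY (fun t => t) w = α' • w := hfw (fun t => t)
    rw [hΦid] at h1
    exact h1
  -- norm of the noise term
  have hrnn : ∀ a > (0:ℝ), 0 ≤ r a α' := fun a ha => hrnonneg a ha α' (le_of_lt hα)
  have hrub : ∀ a > (0:ℝ), α' * r a α' ≤ 1 := by
    intro a ha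
    have := (hrbound a ha α' hα).trans (min_le_left _ _)
    calc α' * r a α' ≤ α' * (1 / α') := by
          apply mul_le_mul_of_nonneg_left this (le_of_lt hα)
      _ = 1 := by field_simp
  have hnoise : ∀ a > (0:ℝ), ‖Rs a ((ContinuousLinearMap.adjoint L) w)‖ ^ 2
      = α' * (r a α') ^ 2 := by
    intro a ha
    set A := ContinuousLinearMap.adjoint L
    have h1 : L (Rs a (A w)) = (α' * r a α') • w := by
      rw [hLcomm a ha, hLLw, _root_.map_smul, hfw (r a), smul_smul]
    have key : L (Rs a (Rs a (A w))) = (α' * (r a α') ^ 2) • w := by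
      rw [hLcomm a ha, h1, _root_.map_smul, hfw (r a), smul_smul]
      congr 1
      ring
    calc ‖Rs a (A w)‖ ^ 2 = ⟪Rs a (A w), Rs a (A w)⟫ := (real_inner_self_eq_norm_sq _).symm
      _ = ⟪A w, Rs a (Rs a (A w))⟫ := hRssa a ha _ _
      _ = ⟪Rs a (Rs a (A w)), A w⟫ := real_inner_comm _ _
      _ = ⟪L (Rs a (Rs a (A w))), w⟫ := ContinuousLinearMap.adjoint_inner_right L _ _
      _ = ⟪(α' * (r a α') ^ 2) • w, w⟫ := by rw [key]
      _ = (α' * (r a α') ^ 2) * ⟪w, w⟫ := real_inner_smul_left _ _ _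
      _ = α' * (r a α') ^ 2 := by
          rw [real_inner_self_eq_norm_sq, hwnorm]; ring
  -- cross term is nonnegative
  have hcross : ∀ a > (0:ℝ),
      0 ≤ ⟪xr a y - xdag, Rs a ((ContinuousLinearMap.adjoint L) w)⟫ := by
    intro a ha
    set A := ContinuousLinearMap.adjoint L
    set b := xr a y - xdag with hbdef
    have hLb : L b = ΦY (r a) (ΦY (fun t => t) y) - y := by
      rw [hbdef, _root_.map_sub, hsol, hxr a ha, hLcomm a ha]
      congr 2
      rw [hΦid]
      rfl
    have key : ⟪b, Rs a (A w)⟫ = (r a α' * (α' * r a α' - 1)) * ⟪y, w⟫ := by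
      calc ⟪b, Rs a (A w)⟫ = ⟪Rs a (A w), b⟫ := real_inner_comm _ _
        _ = ⟪A w, Rs a b⟫ := hRssa a ha _ _
        _ = ⟪Rs a b, A w⟫ := real_inner_comm _ _
        _ = ⟪L (Rs a b), w⟫ := ContinuousLinearMap.adjoint_inner_right L _ _
        _ = ⟪ΦY (r a) (L b), w⟫ := by rw [hLcomm a ha]
        _ = ⟪ΦY (r a) (ΦY (r a) (ΦY (fun t => t) y)) - ΦY (r a) y, w⟫ := by
            rw [hLb, _root_.map_sub]
        _ = ⟪ΦY (r a) (ΦY (r a) (ΦY (fun t => t) y)), w⟫ - ⟪ΦY (r a) y, w⟫ := by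
            rw [inner_sub_left]
        _ = ⟪ΦY (fun t => t) y, ΦY (r a) (ΦY (r a) w)⟫ - ⟪y, ΦY (r a) w⟫ := by
            rw [hΦsa (r a) _ w, hΦsa (r a) _ (ΦY (r a) w), hΦsa (r a) y w]
        _ = ⟪ΦY (fun t => t) y, (r a α' * r a α') • w⟫ - ⟪y, r a α' • w⟫ := by
            rw [hfw (r a), _root_.map_smul, hfw (r a), smul_smul]
        _ = (r a α' * r a α') * ⟪ΦY (fun t => t) y, w⟫ - r a α' * ⟪y, w⟫ := by
            rw [real_inner_smul_right, real_inner_smul_right]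
        _ = (r a α' * r a α') * ⟪y, ΦY (fun t => t) w⟫ - r a α' * ⟪y, w⟫ := by
            rw [hΦsa]
        _ = (r a α' * r a α') * (α' * ⟪y, w⟫) - r a α' * ⟪y, w⟫ := by
            rw [hfw (fun t => t), real_inner_smul_right]
        _ = (r a α' * (α' * r a α' - 1)) * ⟪y, w⟫ := by ring
    rw [key]
    have h1 : r a α' * (α' * r a α' - 1) ≤ 0 := by
      apply mul_nonpos_of_nonneg_of_nonpos (hrnn a ha)
      linarith [hrub a ha]
    nlinarith [mul_nonneg (neg_nonneg.2 h1) (neg_nonneg.2 hyw)]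
  -- decomposition of the regularised solution at ỹ = y + δ • w
  set yt : Y := y + δ • w with hytdef
  have hytball : ‖yt - y‖ ≤ δ := by
    rw [hytdef]
    simp [norm_smul, hwnorm, abs_of_pos hδ]
  have hdecomp : ∀ a > (0:ℝ), xr a yt - xdag
      = (xr a y - xdag) + δ • Rs a ((ContinuousLinearMap.adjoint L) w) := by
    intro a ha
    rw [hxr a ha, hxr a ha, hytdef, _root_.map_add, _root_.map_smul, _root_.map_add, _root_.map_smul]
    abel
  -- the target constant
  have hsq0 : 0 ≤ Real.sqrt ρt := Real.sqrt_nonneg _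
  have hsq1 : Real.sqrt ρt < 1 := by
    rw [show (1:ℝ) = Real.sqrt 1 by simp]
    exact Real.sqrt_lt_sqrt (le_of_lt hρt0) hρt1
  -- pointwise lower bound
  have hmain : ∀ a > (0:ℝ),
      (1 - Real.sqrt ρt) ^ 2 / 2 * (δ ^ 2 / α') ≤ ‖xr a yt - xdag‖ ^ 2 := by
    intro a ha
    have hexpand : ‖xr a yt - xdag‖ ^ 2 = ‖xr a y - xdag‖ ^ 2
        + 2 * (δ * ⟪xr a y - xdag, Rs a ((ContinuousLinearMap.adjoint L) w)⟫)
        + δ ^ 2 * (α' * (r a α') ^ 2) := by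
      rw [hdecomp a ha, norm_add_sq_real, real_inner_smul_right, norm_smul, mul_pow,
        Real.norm_eq_abs, sq_abs, hnoise a ha]
    rw [hexpand]
    have hc := hcross a ha
    have hbias0 : 0 ≤ ‖xr a y - xdag‖ ^ 2 := sq_nonneg _
    rcases le_total a α' with hcase | hcase
    · -- a ≤ α' : the noise term dominates
      have h1 : (1 - α' * r a α') ^ 2 ≤ (1 - a * r a a) ^ 2 :=
        hrt_anti a ha (le_of_lt ha) (le_of_lt hα) hcase
      have h2 : (1 - α' * r a α') ^ 2 < ρt := lt_of_le_of_lt h1 (hrt_lt a ha)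
      have h3 : 0 ≤ 1 - α' * r a α' := by linarith [hrub a ha]
      have h4 : 1 - α' * r a α' ≤ Real.sqrt ρt := by
        have := Real.sqrt_le_sqrt (le_of_lt h2)
        rwa [Real.sqrt_sq h3] at this
      have h5 : (1 - Real.sqrt ρt) / α' ≤ r a α' := by
        rw [div_le_iff₀ hα]
        have hmc : α' * r a α' = r a α' * α' := mul_comm _ _
        linarith
      have h6 : (1 - Real.sqrt ρt) ^ 2 / α' ≤ α' * (r a α') ^ 2 := by
        have h1s : 0 ≤ 1 - Real.sqrt ρt := by linarith
        have h7 : ((1 - Real.sqrt ρt) / α') ^ 2 ≤ (r a α') ^ 2 := by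
          apply sq_le_sq' _ h5
          have hdn : 0 ≤ (1 - Real.sqrt ρt) / α' := div_nonneg h1s (le_of_lt hα)
          linarith [hrnn a ha]
        calc (1 - Real.sqrt ρt) ^ 2 / α' = α' * ((1 - Real.sqrt ρt) / α') ^ 2 := by
              field_simp
          _ ≤ α' * (r a α') ^ 2 := by
              apply mul_le_mul_of_nonneg_left h7 (le_of_lt hα)
      have h8 : (1 - Real.sqrt ρt) ^ 2 / 2 * (δ ^ 2 / α')
          ≤ δ ^ 2 * (α' * (r a α') ^ 2) := by
        calc (1 - Real.sqrt ρt) ^ 2 / 2 * (δ ^ 2 / α')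
            ≤ (1 - Real.sqrt ρt) ^ 2 * (δ ^ 2 / α') := by
              apply mul_le_mul_of_nonneg_right _ (by positivity)
              nlinarith [sq_nonneg (1 - Real.sqrt ρt)]
          _ = δ ^ 2 * ((1 - Real.sqrt ρt) ^ 2 / α') := by ring
          _ ≤ δ ^ 2 * (α' * (r a α') ^ 2) := by
              apply mul_le_mul_of_nonneg_left h6 (by positivity)
      linarith [mul_nonneg (le_of_lt hδ) hc, hbias0]
    · -- α' ≤ a : the bias term dominates
      have hBnn : (0:ℝ) ≤ ‖L‖ ^ 2 := by positivity
      have hμfin : e.measure (Set.Ioc (0:ℝ) (‖L‖ ^ 2)) ≠ ⊤ := by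
        rw [StieltjesFunction.measure_Ioc]
        exact ENNReal.ofReal_ne_top
      have hintgr : ∀ c > (0:ℝ), IntegrableOn (fun t => (1 - t * r c t) ^ 2)
          (Set.Ioc (0:ℝ) (‖L‖ ^ 2)) e.measure := by
        intro c hc
        apply IntegrableOn.mono_set _ Set.Ioc_subset_Icc_self
        apply ContinuousOn.integrableOn_Icc
        apply ContinuousOn.pow
        apply ContinuousOn.sub continuousOn_const
        exact ContinuousOn.mul (continuousOn_id.mono (fun x hx => hx.1))
          ((hrcont c hc).mono (fun x hx => hx.1))
      have hbias : δ ^ 2 / α' ≤ ‖xr a y - xdag‖ ^ 2 := by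
        have h1 : ‖xr α' y - xdag‖ ^ 2 = δ ^ 2 / α' := by
          field_simp
          linarith [heq]
        rw [← h1, hint α' hα, hint a ha]
        apply setIntegral_mono_on (hintgr α' hα) (hintgr a ha) measurableSet_Ioc
        intro t ht
        exact hrt_mono t (le_of_lt ht.1) hα ha hcase
      have h9 : (1 - Real.sqrt ρt) ^ 2 / 2 * (δ ^ 2 / α') ≤ δ ^ 2 / α' := by
        have hle1 : (1 - Real.sqrt ρt) ^ 2 / 2 ≤ 1 := by nlinarith
        have hpos2 : (0:ℝ) ≤ δ ^ 2 / α' := by positivity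
        calc (1 - Real.sqrt ρt) ^ 2 / 2 * (δ ^ 2 / α') ≤ 1 * (δ ^ 2 / α') :=
              mul_le_mul_of_nonneg_right hle1 hpos2
          _ = δ ^ 2 / α' := one_mul _
      have hnn2 : (0:ℝ) ≤ δ ^ 2 * (α' * (r a α') ^ 2) := by
        have := hrnn a ha
        positivity
      linarith [mul_nonneg (le_of_lt hδ) hc]
  -- assemble: bound the infimum, then the supremum
  have hne : Nonempty {a : ℝ // 0 < a} := ⟨⟨1, one_pos⟩⟩
  have hinf : (1 - Real.sqrt ρt) ^ 2 / 2 * (δ ^ 2 / α')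
      ≤ ⨅ a : {a : ℝ // 0 < a}, ‖xr a.1 yt - xdag‖ ^ 2 :=
    le_ciInf fun a => hmain a.1 a.2
  -- boundedness of the sup
  set M : ℝ := (‖Rs 1‖ * ‖ContinuousLinearMap.adjoint L‖ * (‖y‖ + δ) + ‖xdag‖) ^ 2 with hMdef
  have hbdd : BddAbove (Set.range fun z : {z : Y // ‖z - y‖ ≤ δ} =>
      ⨅ a : {a : ℝ // 0 < a}, ‖xr a.1 z.1 - xdag‖ ^ 2) := by
    refine ⟨M, ?_⟩
    rintro v ⟨z, rfl⟩
    have hlow : BddBelow (Set.range fun a : {a : ℝ // 0 < a} => ‖xr a.1 z.1 - xdag‖ ^ 2) := by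
      refine ⟨0, ?_⟩
      rintro v ⟨a, rfl⟩
      positivity
    calc (⨅ a : {a : ℝ // 0 < a}, ‖xr a.1 z.1 - xdag‖ ^ 2)
        ≤ ‖xr 1 z.1 - xdag‖ ^ 2 := ciInf_le hlow ⟨1, one_pos⟩
      _ ≤ M := by
          rw [hMdef]
          have h1 : ‖xr 1 z.1 - xdag‖ ≤ ‖Rs 1‖ * ‖ContinuousLinearMap.adjoint L‖ * (‖y‖ + δ)
              + ‖xdag‖ := by
            calc ‖xr 1 z.1 - xdag‖ ≤ ‖xr 1 z.1‖ + ‖xdag‖ := norm_sub_le _ _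
              _ ≤ ‖Rs 1‖ * ‖ContinuousLinearMap.adjoint L‖ * (‖y‖ + δ) + ‖xdag‖ := by
                  apply add_le_add_left
                  rw [hxr 1 one_pos]
                  calc ‖Rs 1 ((ContinuousLinearMap.adjoint L) z.1)‖
                      ≤ ‖Rs 1‖ * ‖(ContinuousLinearMap.adjoint L) z.1‖ :=
                        (Rs 1).le_opNorm _
                    _ ≤ ‖Rs 1‖ * (‖ContinuousLinearMap.adjoint L‖ * ‖z.1‖) := by
                        apply mul_le_mul_of_nonneg_left
                          ((ContinuousLinearMap.adjoint L).le_opNorm _) (norm_nonneg _)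
                    _ ≤ ‖Rs 1‖ * ‖ContinuousLinearMap.adjoint L‖ * (‖y‖ + δ) := by
                        rw [mul_assoc]
                        apply mul_le_mul_of_nonneg_left _ (norm_nonneg _)
                        apply mul_le_mul_of_nonneg_left _ (norm_nonneg _)
                        calc ‖z.1‖ = ‖(z.1 - y) + y‖ := by rw [sub_add_cancel]
                          _ ≤ ‖z.1 - y‖ + ‖y‖ := norm_add_le _ _
                          _ ≤ δ + ‖y‖ := add_le_add_left z.2 _
                          _ = ‖y‖ + δ := by ring
          exact pow_le_pow_left₀ (norm_nonneg _) h1 2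
  calc (1 - Real.sqrt ρt) ^ 2 / 2 * (δ ^ 2 / α')
      ≤ ⨅ a : {a : ℝ // 0 < a}, ‖xr a.1 yt - xdag‖ ^ 2 := hinf
    _ ≤ ⨆ z : {z : Y // ‖z - y‖ ≤ δ}, ⨅ a : {a : ℝ // 0 < a}, ‖xr a.1 z.1 - xdag‖ ^ 2 :=
      le_ciSup hbdd ⟨yt, hytball⟩
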